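/- arXiv:2407.14347 — 3 statements merged into one kernel-verified Lean document; each statement's English description precedes it below -/
import Mathlib

section
/- Let θ : ℝ^d × G → ℝ^d be a polynomial right action of a Lie group G on ℝ^d (each θ_v : x ↦ θ(x,v) is a polynomial diffeomorphism with inverse θ_{v⁻¹}, depending polynomially on coordinates of v). Then for every v ∈ G the Jacobian determinant det(D_x θ_v) equals 1 for all x. -/
open MvPolynomial

lemma aeval_eq_eval'' {σ : Type*} (y : σ → ℝ) (q : MvPolynomial σ ℝ) :
    aeval y q = eval y q := rfl

lemma hasFDerivAt_congr_key {d : ℕ} (x : Fin d → ℝ) {F G : (Fin d → ℝ) → ℝ}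
    {L L' : (Fin d → ℝ) →L[ℝ] ℝ} (h1 : F = G) (h2 : L = L') (h : HasFDerivAt G L' x) :
    HasFDerivAt F L x := h1 ▸ h2 ▸ h

lemma hasFDerivAt_eval_sum_elim {d n : ℕ} (v : Fin n → ℝ)
    (P : MvPolynomial (Fin d ⊕ Fin n) ℝ) (x : Fin d → ℝ) :
    HasFDerivAt (fun x' : Fin d → ℝ => eval (Sum.elim x' v) P)
      (∑ j : Fin d, eval (Sum.elim x v) (pderiv (Sum.inl j) P) •
        (ContinuousLinearMap.proj j : (Fin d → ℝ) →L[ℝ] ℝ)) x := by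
  induction P using MvPolynomial.induction_on with
  | C a =>
      simp only [eval_C, pderiv_C, map_zero, zero_smul, Finset.sum_const_zero]
      exact hasFDerivAt_const a x
  | add P Q hP hQ =>
      have := hP.add hQ
      refine hasFDerivAt_congr_key x ?_ ?_ this
      · funext x'; simp
      · simp [map_add, add_smul, Finset.sum_add_distrib]
  | mul_X P s hP =>
      cases s with
      | inl i =>
          have h2 : HasFDerivAt (fun x' : Fin d → ℝ => x' i)
              (ContinuousLinearMap.proj i : (Fin d → ℝ) →L[ℝ] ℝ) x := hasFDerivAt_apply i x
          have hm := hP.mul h2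
          refine hasFDerivAt_congr_key x ?_ ?_ hm
          · funext x'; simp
          · ext y
            simp only [pderiv_mul, map_add, map_mul, eval_X, Sum.elim_inl, pderiv_X,
              ContinuousLinearMap.add_apply, ContinuousLinearMap.smul_apply,
              ContinuousLinearMap.sum_apply, ContinuousLinearMap.proj_apply,
              Pi.single_apply, smul_eq_mul, apply_ite (eval (Sum.elim x v)), map_one,
              map_zero, Sum.inl.injEq, add_mul, Finset.sum_add_distrib, ite_mul, one_mul,
              zero_mul, mul_ite, mul_zero, Finset.sum_ite_eq, Finset.mem_univ, if_true]
            rw [add_comm]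
            congr 1
            · ring
            · rw [Finset.mul_sum]
              exact Finset.sum_congr rfl fun j _ => by ring
      | inr k =>
          have hm := hP.mul_const (v k)
          refine hasFDerivAt_congr_key x ?_ ?_ hm
          · funext x'; simp
          · ext y
            simp only [pderiv_mul, map_add, map_mul, eval_X, Sum.elim_inr, pderiv_X,
              Pi.single_apply, ContinuousLinearMap.smul_apply,
              ContinuousLinearMap.sum_apply, ContinuousLinearMap.proj_apply, smul_eq_mul,
              reduceCtorEq, if_false, map_zero, mul_zero, add_zero]
            rw [Finset.mul_sum]
            exact Finset.sum_congr rfl fun j _ => by ring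

/-- For a polynomial right action `θ` of a Lie group `G` (identified with `ℝ^n`
via coordinates with polynomial group operations, unit `e`, inversion `ι`) on `ℝ^d`, the
Jacobian determinant `det (D_x θ_v)` equals `1` for all `x` and `v`. -/
theorem stmt_2 (d n : ℕ)
    (θ : (Fin d → ℝ) → (Fin n → ℝ) → (Fin d → ℝ))
    (hθpoly : ∀ i : Fin d, ∃ p : MvPolynomial (Fin d ⊕ Fin n) ℝ,
      ∀ x v, θ x v i = eval (Sum.elim x v) p)
    (mul : (Fin n → ℝ) → (Fin n → ℝ) → (Fin n → ℝ))
    (e : Fin n → ℝ) (ι : (Fin n → ℝ) → (Fin n → ℝ))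
    (hmulpoly : ∀ i : Fin n, ∃ p : MvPolynomial (Fin n ⊕ Fin n) ℝ,
      ∀ v w, mul v w i = eval (Sum.elim v w) p)
    (hιpoly : ∀ i : Fin n, ∃ p : MvPolynomial (Fin n) ℝ, ∀ v, ι v i = eval v p)
    (hinv : ∀ v, mul v (ι v) = e ∧ mul (ι v) v = e)
    (hunit : ∀ x, θ x e = x)
    (hact : ∀ x v w, θ (θ x v) w = θ x (mul v w)) :
    ∀ (v : Fin n → ℝ) (x : Fin d → ℝ),
      Matrix.det (Matrix.of fun i j : Fin d =>
        fderiv ℝ (fun x' => θ x' v i) x (Pi.single j 1)) = 1 := by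
  classical
  choose p hp using hθpoly
  choose r hr using hιpoly
  set Dp : MvPolynomial (Fin d ⊕ Fin n) ℝ :=
    (Matrix.of fun i j : Fin d => pderiv (Sum.inl j) (p i)).det with hDp
  have hELIM : ∀ y : (Fin d ⊕ Fin n) → ℝ, Sum.elim (y ∘ Sum.inl) (y ∘ Sum.inr) = y := by
    intro y; funext s; cases s <;> rfl
  -- the Jacobian determinant as evaluation of Dp
  have hJ : ∀ (v : Fin n → ℝ) (x : Fin d → ℝ), Matrix.det (Matrix.of fun i j : Fin d =>
      fderiv ℝ (fun x' => θ x' v i) x (Pi.single j 1)) = eval (Sum.elim x v) Dp := by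
    intro v x
    have hent : ∀ i j : Fin d, fderiv ℝ (fun x' => θ x' v i) x (Pi.single j 1)
        = eval (Sum.elim x v) (pderiv (Sum.inl j) (p i)) := by
      intro i j
      have hfe : (fun x' => θ x' v i) = fun x' => eval (Sum.elim x' v) (p i) := by
        funext x'; exact hp i x' v
      rw [hfe, (hasFDerivAt_eval_sum_elim v (p i) x).fderiv]
      simp [Pi.single_apply, Finset.sum_ite_eq', mul_ite]
    have hmat : (Matrix.of fun i j : Fin d => fderiv ℝ (fun x' => θ x' v i) x (Pi.single j 1))
        = (Matrix.of fun i j : Fin d => pderiv (Sum.inl j) (p i)).map (eval (Sum.elim x v)) := by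
      ext i j; simp [hent, Matrix.map_apply]
    rw [hmat]; exact (RingHom.map_det (eval (Sum.elim x v)) _).symm
  -- derivative of the full map x ↦ θ x v
  have hApt : ∀ (v : Fin n → ℝ) (x : Fin d → ℝ), HasFDerivAt (fun x' => θ x' v)
      (ContinuousLinearMap.pi fun i => ∑ j : Fin d,
        eval (Sum.elim x v) (pderiv (Sum.inl j) (p i)) •
        (ContinuousLinearMap.proj j : (Fin d → ℝ) →L[ℝ] ℝ)) x := by
    intro v x
    have hfe : (fun x' => θ x' v) = fun (x' : Fin d → ℝ) (i : Fin d) =>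
        eval (Sum.elim x' v) (p i) := by
      funext x' i; exact hp i x' v
    rw [hfe]
    exact hasFDerivAt_pi.2 fun i => hasFDerivAt_eval_sum_elim v (p i) x
  -- matrix of that derivative
  have hdet : ∀ (v : Fin n → ℝ) (x : Fin d → ℝ),
      (LinearMap.toMatrix' ((ContinuousLinearMap.pi fun i => ∑ j : Fin d,
        eval (Sum.elim x v) (pderiv (Sum.inl j) (p i)) •
        (ContinuousLinearMap.proj j : (Fin d → ℝ) →L[ℝ] ℝ) :
          (Fin d → ℝ) →L[ℝ] (Fin d → ℝ)) : (Fin d → ℝ) →ₗ[ℝ] (Fin d → ℝ))).det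
      = eval (Sum.elim x v) Dp := by
    intro v x
    have hm : (LinearMap.toMatrix' ((ContinuousLinearMap.pi fun i => ∑ j : Fin d,
        eval (Sum.elim x v) (pderiv (Sum.inl j) (p i)) •
        (ContinuousLinearMap.proj j : (Fin d → ℝ) →L[ℝ] ℝ) :
          (Fin d → ℝ) →L[ℝ] (Fin d → ℝ)) : (Fin d → ℝ) →ₗ[ℝ] (Fin d → ℝ)))
        = (Matrix.of fun i j : Fin d => pderiv (Sum.inl j) (p i)).map (eval (Sum.elim x v)) := by
      ext i j
      rw [LinearMap.toMatrix'_apply]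
      simp [Pi.single_apply, Finset.sum_ite_eq', mul_ite, Matrix.map_apply]
    rw [hm]; exact (RingHom.map_det (eval (Sum.elim x v)) _).symm
  -- the inverse identity, pointwise
  have hinvdet : ∀ (v : Fin n → ℝ) (x : Fin d → ℝ),
      eval (Sum.elim (θ x v) (ι v)) Dp * eval (Sum.elim x v) Dp = 1 := by
    intro v x
    have hA := hApt v x
    have hB := hApt (ι v) (θ x v)
    have hcomp := hB.comp x hA
    have hid : ((fun y => θ y (ι v)) ∘ fun x' => θ x' v) = id := by
      funext z; simp [Function.comp, hact, (hinv v).1, hunit]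
    rw [hid] at hcomp
    have huniq := hcomp.unique (hasFDerivAt_id x)
    have := congrArg (fun (L : (Fin d → ℝ) →L[ℝ] (Fin d → ℝ)) =>
      (LinearMap.toMatrix' (L : (Fin d → ℝ) →ₗ[ℝ] (Fin d → ℝ))).det) huniq
    simp only [ContinuousLinearMap.toLinearMap_comp, ContinuousLinearMap.coe_id,
      LinearMap.toMatrix'_comp, Matrix.det_mul, LinearMap.toMatrix'_id, Matrix.det_one] at this
    rw [hdet, hdet] at this
    exact this
  -- the inverse Jacobian determinant as evaluation of a polynomial E
  set E : MvPolynomial (Fin d ⊕ Fin n) ℝ :=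
    aeval (Sum.elim (fun i => p i) (fun k => rename Sum.inr (r k))) Dp with hEdef
  have hEeval : ∀ y : (Fin d ⊕ Fin n) → ℝ,
      eval y E = eval (Sum.elim (θ (y ∘ Sum.inl) (y ∘ Sum.inr)) (ι (y ∘ Sum.inr))) Dp := by
    intro y
    have h1 : eval y E = eval (fun s => eval y (Sum.elim (fun i => p i)
        (fun k => rename Sum.inr (r k)) s)) Dp := by
      rw [hEdef]
      exact comp_aeval_apply _ (aeval y) Dp
    have h3 : (fun s => eval y (Sum.elim (fun i => p i)
        (fun k => rename Sum.inr (r k)) s))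
        = Sum.elim (θ (y ∘ Sum.inl) (y ∘ Sum.inr)) (ι (y ∘ Sum.inr)) := by
      funext s
      cases s with
      | inl i =>
          simp only [Sum.elim_inl]
          rw [hp i (y ∘ Sum.inl) (y ∘ Sum.inr), hELIM y]
      | inr k =>
          simp only [Sum.elim_inr]
          rw [hr k (y ∘ Sum.inr), eval_rename]
    rw [h1, h3]
  have hpt : ∀ y : (Fin d ⊕ Fin n) → ℝ, eval y E * eval y Dp = 1 := by
    intro y
    rw [hEeval y]
    have h2 := hinvdet (y ∘ Sum.inr) (y ∘ Sum.inl)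
    rwa [hELIM y] at h2
  -- eval of Dp is constant
  have hconst : ∀ y z : (Fin d ⊕ Fin n) → ℝ, eval y Dp = eval z Dp := by
    intro y z
    set g : (Fin d ⊕ Fin n) → Polynomial ℝ :=
      fun s => Polynomial.C (y s) + Polynomial.C (z s - y s) * Polynomial.X with hg
    have hline : ∀ (q : MvPolynomial (Fin d ⊕ Fin n) ℝ) (t : ℝ),
        Polynomial.eval t (aeval g q) = eval (fun s => y s + t * (z s - y s)) q := by
      intro q t
      have h1 : (Polynomial.aeval t) (aeval g q)
          = aeval (fun s => Polynomial.aeval t (g s)) q :=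
        comp_aeval_apply _ (Polynomial.aeval t) q
      have h2 : (fun s : Fin d ⊕ Fin n => (Polynomial.aeval t) (g s))
          = fun s => y s + t * (z s - y s) := by
        funext s; simp [hg]; ring
      rw [← Polynomial.coe_aeval_eq_eval, h1, h2]
      exact aeval_eq_eval'' _ q
    have hED : aeval g E * aeval g Dp = 1 := by
      apply Polynomial.funext
      intro t
      rw [Polynomial.eval_mul, hline, hline, Polynomial.eval_one]
      exact hpt _
    have hu : IsUnit (aeval g Dp) :=
      IsUnit.of_mul_eq_one _ (by rw [mul_comm]; exact hED)
    obtain ⟨c, -, hc⟩ := Polynomial.isUnit_iff.1 hu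
    have h0 := hline Dp 0
    have h1' := hline Dp 1
    rw [← hc, Polynomial.eval_C] at h0 h1'
    have hy : (fun s => y s + 0 * (z s - y s)) = y := by funext s; ring
    have hz : (fun s => y s + 1 * (z s - y s)) = z := by funext s; ring
    rw [hy] at h0
    rw [hz] at h1'
    rw [← h0, ← h1']
  -- conclude
  intro v x
  rw [hJ v x, hconst (Sum.elim x v) (Sum.elim x e), ← hJ e x]
  have hent : ∀ i j : Fin d, fderiv ℝ (fun x' => θ x' e i) x (Pi.single j 1)
      = if i = j then (1:ℝ) else 0 := by
    intro i j
    have hfe : (fun x' => θ x' e i) = fun x' : Fin d → ℝ => x' i := by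
      funext x'; rw [hunit]
    rw [hfe, (hasFDerivAt_apply i x).fderiv]
    simp [Pi.single_apply]
  have hone : (Matrix.of fun i j : Fin d =>
      fderiv ℝ (fun x' => θ x' e i) x (Pi.single j 1)) = 1 := by
    ext i j
    rw [Matrix.of_apply, hent i j, Matrix.one_apply]
  rw [hone, Matrix.det_one]
end

section
/- For the quasi-norm ‖v‖_α = (Σ_{j=1}^n v_j^{2q/q_j})^{1/(2q)} on ℝ^n with positive integer weights q_j dividing 2q, and ⟨v⟩_α = (1 + ‖v‖_α^{2q})^{1/(2q)}, the function v ↦ ⟨v⟩_α^k is Lebesgue integrable over ℝ^n if and only if k < -(q_1 + … + q_n). -/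
open MeasureTheory Set Real
open scoped ENNReal

private lemma even_pow_nonneg (x : ℝ) (m : ℕ) : 0 ≤ x ^ (2 * m) := by
  rw [mul_comm, pow_mul]; positivity

private lemma base_pos (x : ℝ) (m : ℕ) : 0 < 1 + x ^ (2 * m) := by
  have := even_pow_nonneg x m; linarith

private lemma oneD_cont (m : ℕ) (s : ℝ) :
    Continuous (fun x : ℝ => (1 + x ^ (2 * m)) ^ s) :=
  (continuous_const.add (continuous_pow _)).rpow_const
    (fun x => Or.inl (base_pos x m).ne')

private lemma oneD_integrable_iff {m : ℕ} (hm : 1 ≤ m) (s : ℝ) :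
    Integrable (fun x : ℝ => (1 + x ^ (2 * m)) ^ s) ↔ 2 * (m : ℝ) * s < -1 := by
  have hm' : (1 : ℝ) ≤ (m : ℝ) := by exact_mod_cast hm
  have hrw : ∀ x : ℝ, 0 < x → (x ^ (2 * m)) ^ s = x ^ (2 * (m : ℝ) * s) := by
    intro x hx
    rw [← Real.rpow_natCast x (2 * m), ← Real.rpow_mul hx.le]
    norm_num
  have hxp : ∀ x : ℝ, 1 < x → (1 : ℝ) ≤ x ^ (2 * m) := by
    intro x hx
    calc (1:ℝ) = 1 ^ (2*m) := (one_pow _).symm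
    _ ≤ x ^ (2*m) := pow_le_pow_left₀ (by norm_num) hx.le _
  constructor
  · intro hint
    by_contra hlt
    push_neg at hlt
    rcases le_or_gt 0 s with hs | hs
    · have h1 : IntegrableOn (fun _ : ℝ => (1 : ℝ)) (Ioi (1:ℝ)) := by
        refine (hint.integrableOn).mono' aestronglyMeasurable_const ?_
        filter_upwards [ae_restrict_mem measurableSet_Ioi] with x hx
        have h2 : (1 : ℝ) ≤ (1 + x ^ (2 * m)) ^ s :=
          Real.one_le_rpow (by have := even_pow_nonneg x m; linarith) hs
        simpa [abs_of_nonneg] using h2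
      rw [integrableOn_const_iff] at h1
      simp [Real.volume_Ioi] at h1
    · have hIoi : IntegrableOn (fun x : ℝ => x ^ (2 * (m : ℝ) * s)) (Ioi 1) := by
        refine ((hint.integrableOn).const_mul ((2:ℝ) ^ (-s))).mono'
          ((continuousOn_id.rpow_const fun x hx =>
            Or.inl (ne_of_gt (lt_trans one_pos hx))).aestronglyMeasurable measurableSet_Ioi) ?_
        filter_upwards [ae_restrict_mem measurableSet_Ioi] with x hx
        rw [mem_Ioi] at hx
        have hx0 : (0:ℝ) < x := lt_trans one_pos hx
        have h1 : (1 + x ^ (2*m)) ≤ 2 * x ^ (2*m) := by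
          have := hxp x hx; linarith
        have h2 : (2 * x ^ (2*m)) ^ s ≤ (1 + x ^ (2*m)) ^ s :=
          Real.rpow_le_rpow_of_nonpos (base_pos x m) h1 hs.le
        rw [Real.mul_rpow (by norm_num) (even_pow_nonneg x m), hrw x hx0] at h2
        have h3 : (0:ℝ) < (2:ℝ) ^ (-s) := Real.rpow_pos_of_pos (by norm_num) _
        have h4 : x ^ (2 * (m:ℝ) * s) = (2:ℝ)^(-s) * ((2:ℝ)^s * x ^ (2*(m:ℝ)*s)) := by
          rw [← mul_assoc, ← Real.rpow_add (by norm_num : (0:ℝ) < 2)]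
          norm_num
        rw [Real.norm_eq_abs, abs_of_pos (Real.rpow_pos_of_pos hx0 _), h4]
        exact mul_le_mul_of_nonneg_left h2 h3.le
      rw [integrableOn_Ioi_rpow_iff one_pos] at hIoi
      linarith
  · intro h
    have hs : s < 0 := by
      by_contra hs; push_neg at hs
      nlinarith
    have hIoi : IntegrableOn (fun x : ℝ => (1 + x ^ (2 * m)) ^ s) (Ioi 1) := by
      refine ((integrableOn_Ioi_rpow_iff one_pos).mpr h).mono'
        ((oneD_cont m s).aestronglyMeasurable.restrict) ?_
      filter_upwards [ae_restrict_mem measurableSet_Ioi] with x hx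
      rw [mem_Ioi] at hx
      have hx0 : (0:ℝ) < x := lt_trans one_pos hx
      have h2 : (1 + x ^ (2*m)) ^ s ≤ (x ^ (2*m)) ^ s :=
        Real.rpow_le_rpow_of_nonpos (by positivity) (by linarith [even_pow_nonneg x m]) hs.le
      rw [hrw x hx0] at h2
      rw [Real.norm_eq_abs, abs_of_pos (Real.rpow_pos_of_pos (base_pos x m) _)]
      exact h2
    have hIio : IntegrableOn (fun x : ℝ => (1 + x ^ (2 * m)) ^ s) (Iio (-1)) := by
      rw [← (Measure.measurePreserving_neg (volume : Measure ℝ)).integrableOn_comp_preimage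
          (Homeomorph.neg ℝ).measurableEmbedding]
      simp only [Function.comp_def, neg_preimage, neg_Iio, neg_neg]
      have : ∀ x : ℝ, (1 + (-x) ^ (2*m)) ^ s = (1 + x ^ (2*m)) ^ s := by
        intro x; congr 2; exact Even.neg_pow ⟨m, by ring⟩ x
      simpa [this] using hIoi
    have hIcc : IntegrableOn (fun x : ℝ => (1 + x ^ (2 * m)) ^ s) (Icc (-1) 1) :=
      (oneD_cont m s).continuousOn.integrableOn_Icc
    rw [← integrableOn_univ]
    have hsub : (univ : Set ℝ) ⊆ Iio (-1) ∪ (Icc (-1) 1 ∪ Ioi 1) := by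
      intro x _
      rcases lt_or_ge x (-1) with h1 | h1
      · exact Or.inl h1
      rcases le_or_gt x 1 with h2 | h2
      · exact Or.inr (Or.inl ⟨h1, h2⟩)
      · exact Or.inr (Or.inr h2)
    exact (hIio.union (hIcc.union hIoi)).mono_set hsub

private lemma oneD_lintegral_ne_top_iff {m : ℕ} (hm : 1 ≤ m) (s : ℝ) :
    (∫⁻ x : ℝ, ENNReal.ofReal ((1 + x ^ (2 * m)) ^ s)) ≠ ⊤ ↔ 2 * (m : ℝ) * s < -1 := by
  rw [lintegral_ofReal_ne_top_iff_integrable (oneD_cont m s).aestronglyMeasurable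
    (ae_of_all _ fun x => Real.rpow_nonneg (base_pos x m).le s)]
  exact oneD_integrable_iff hm s

private lemma oneD_lintegral_ne_zero (m : ℕ) (s : ℝ) :
    (∫⁻ x : ℝ, ENNReal.ofReal ((1 + x ^ (2 * m)) ^ s)) ≠ 0 := by
  intro h0
  have hmeas : Measurable (fun x : ℝ => ENNReal.ofReal ((1 + x ^ (2 * m)) ^ s)) :=
    ENNReal.measurable_ofReal.comp (oneD_cont m s).measurable
  rw [lintegral_eq_zero_iff hmeas] at h0
  obtain ⟨x, hx⟩ := h0.exists
  exact (ENNReal.ofReal_pos.mpr (Real.rpow_pos_of_pos (base_pos x m) s)).ne'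
    (by simpa using hx)

private lemma lintegral_scale {m : ℕ} (hm : 1 ≤ m) {C : ℝ} (hC : 0 < C) (s : ℝ) :
    (∫⁻ x : ℝ, ENNReal.ofReal ((C + x ^ (2 * m)) ^ s))
      = ENNReal.ofReal (C ^ (s + 1 / (2 * (m : ℝ)))) *
        ∫⁻ x : ℝ, ENNReal.ofReal ((1 + x ^ (2 * m)) ^ s) := by
  have hm0 : (2 * (m:ℝ)) ≠ 0 := by positivity
  set a : ℝ := C ^ (1 / (2 * (m:ℝ))) with ha_def
  have ha : 0 < a := Real.rpow_pos_of_pos hC _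
  have ha2m : a ^ (2 * m) = C := by
    rw [ha_def, ← Real.rpow_natCast (C ^ (1 / (2 * (m:ℝ)))) (2*m), ← Real.rpow_mul hC.le]
    rw [show (1 / (2 * (m:ℝ))) * ((2*m : ℕ) : ℝ) = 1 by push_cast; field_simp]
    exact Real.rpow_one C
  have hg : Measurable (fun x : ℝ => ENNReal.ofReal ((C + x ^ (2 * m)) ^ s)) := by
    refine ENNReal.measurable_ofReal.comp ?_
    refine ((continuous_const.add (continuous_pow _)).rpow_const fun x => Or.inl ?_).measurable
    have := even_pow_nonneg x m; exact (by linarith : (0:ℝ) < C + x ^ (2 * m)).ne'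
  have h1 : (∫⁻ x : ℝ, ENNReal.ofReal ((C + (a * x) ^ (2 * m)) ^ s))
      = ENNReal.ofReal |a⁻¹| * ∫⁻ x : ℝ, ENNReal.ofReal ((C + x ^ (2 * m)) ^ s) := by
    rw [← lintegral_map hg (measurable_const_mul a), Real.map_volume_mul_left ha.ne',
      lintegral_smul_measure, smul_eq_mul]
  have h2 : ∀ x : ℝ, (C + (a * x) ^ (2 * m)) ^ s = C ^ s * (1 + x ^ (2 * m)) ^ s := by
    intro x
    rw [mul_pow, ha2m, show C + C * x ^ (2*m) = C * (1 + x ^ (2*m)) by ring,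
      Real.mul_rpow hC.le (base_pos x m).le]
  simp_rw [h2, ENNReal.ofReal_mul (Real.rpow_nonneg hC.le s)] at h1
  rw [lintegral_const_mul' _ _ ENNReal.ofReal_ne_top] at h1
  have key : ENNReal.ofReal a * (ENNReal.ofReal |a⁻¹| *
      ∫⁻ x : ℝ, ENNReal.ofReal ((C + x ^ (2 * m)) ^ s))
      = ∫⁻ x : ℝ, ENNReal.ofReal ((C + x ^ (2 * m)) ^ s) := by
    rw [← mul_assoc, ← ENNReal.ofReal_mul ha.le, abs_of_pos (inv_pos.mpr ha),
      mul_inv_cancel₀ ha.ne', ENNReal.ofReal_one, one_mul]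
  calc (∫⁻ x : ℝ, ENNReal.ofReal ((C + x ^ (2 * m)) ^ s))
      = ENNReal.ofReal a * (ENNReal.ofReal |a⁻¹| *
        ∫⁻ x : ℝ, ENNReal.ofReal ((C + x ^ (2 * m)) ^ s)) := key.symm
    _ = ENNReal.ofReal a * (ENNReal.ofReal (C ^ s) *
        ∫⁻ x : ℝ, ENNReal.ofReal ((1 + x ^ (2 * m)) ^ s)) := by rw [← h1]
    _ = ENNReal.ofReal (C ^ (s + 1 / (2 * (m : ℝ)))) *
        ∫⁻ x : ℝ, ENNReal.ofReal ((1 + x ^ (2 * m)) ^ s) := by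
        rw [← mul_assoc, ← ENNReal.ofReal_mul ha.le, ha_def,
          ← Real.rpow_add hC, add_comm]

private lemma key (q : ℕ) (hq : 0 < q) :
    ∀ n : ℕ, ∀ w : Fin n → ℕ, (∀ j, 1 ≤ w j) → (∀ j, w j ∣ q) → ∀ k : ℝ,
    ((∫⁻ v : Fin n → ℝ,
        ENNReal.ofReal ((1 + ∑ j, v j ^ (2 * (q / w j))) ^ (k / (2 * (q : ℝ))))) ≠ ⊤
      ↔ (n = 0 ∨ k < -∑ j, (w j : ℝ))) := by
  intro n
  induction n with
  | zero =>
    intro w hw hdvd k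
    simp [Real.one_rpow, lintegral_const]
  | succ n ih =>
    intro w hw hdvd k
    have hQ : (0:ℝ) < (q:ℝ) := by exact_mod_cast hq
    set i : Fin (n+1) := Fin.last n with hi_def
    have hW : (1:ℝ) ≤ (w i : ℝ) := by exact_mod_cast hw i
    have hW0 : (0:ℝ) < (w i : ℝ) := by linarith
    set W : ℝ := (w i : ℝ) with hW_def
    set m : ℕ := q / w i with hm_def
    have hm : 1 ≤ m := (Nat.one_le_div_iff (hw i)).mpr (Nat.le_of_dvd hq (hdvd i))
    have hmR : (m:ℝ) = (q:ℝ) / W := by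
      rw [hm_def, Nat.cast_div (hdvd i) hW0.ne']
    have hmR0 : (0:ℝ) < (m:ℝ) := by
      have : (1:ℝ) ≤ (m:ℝ) := by exact_mod_cast hm
      linarith
    set s : ℝ := k / (2 * (q:ℝ)) with hs_def
    have Cpos : ∀ y : Fin n → ℝ, 0 < 1 + ∑ j, y j ^ (2 * (q / w (Fin.castSucc j))) := by
      intro y
      have : 0 ≤ ∑ j, y j ^ (2 * (q / w (Fin.castSucc j))) :=
        Finset.sum_nonneg fun j _ => even_pow_nonneg _ _
      linarith
    set G : ℝ × (Fin n → ℝ) → ℝ≥0∞ := fun p =>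
      ENNReal.ofReal (((1 + ∑ j, p.2 j ^ (2 * (q / w (Fin.castSucc j)))) + p.1 ^ (2*m)) ^ s)
      with hG_def
    have hGmeas : Measurable G := by
      refine ENNReal.measurable_ofReal.comp (Continuous.measurable ?_)
      refine Continuous.rpow_const ?_ fun p => Or.inl ?_
      · exact (continuous_const.add (continuous_finset_sum _ fun j _ =>
          ((continuous_apply j).comp continuous_snd).pow _)).add ((continuous_fst).pow _)
      · have h1 := Cpos p.2
        have h2 := even_pow_nonneg p.1 m
        exact (by linarith : (0:ℝ) < _).ne'
    set J : ℝ≥0∞ := ∫⁻ x : ℝ, ENNReal.ofReal ((1 + x ^ (2 * m)) ^ s) with hJ_def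
    have htot : (∫⁻ v : Fin (n+1) → ℝ,
        ENNReal.ofReal ((1 + ∑ j, v j ^ (2 * (q / w j))) ^ s))
        = ∫⁻ y : Fin n → ℝ,
            ENNReal.ofReal ((1 + ∑ j, y j ^ (2 * (q / w (Fin.castSucc j)))) ^ (s + 1/(2*(m:ℝ)))) * J := by
      have hMP := volume_preserving_piFinSuccAbove (fun _ : Fin (n+1) => ℝ) i
      calc (∫⁻ v : Fin (n+1) → ℝ,
          ENNReal.ofReal ((1 + ∑ j, v j ^ (2 * (q / w j))) ^ s))
          = ∫⁻ v : Fin (n+1) → ℝ, G (MeasurableEquiv.piFinSuccAbove (fun _ => ℝ) i v) := by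
            refine lintegral_congr fun v => ?_
            have : G (MeasurableEquiv.piFinSuccAbove (fun _ => ℝ) i v)
                = ENNReal.ofReal (((1 + ∑ j : Fin n, v (i.succAbove j) ^ (2 * (q / w (Fin.castSucc j)))) + v i ^ (2*m)) ^ s) := rfl
            rw [this]
            congr 2
            rw [Fin.sum_univ_castSucc]
            have hsa : ∀ j : Fin n, i.succAbove j = Fin.castSucc j := fun j => by
              rw [hi_def, Fin.succAbove_last]
            simp_rw [hsa, hm_def, hi_def]
            ring
        _ = ∫⁻ p : ℝ × (Fin n → ℝ), G p := hMP.lintegral_comp hGmeas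
        _ = ∫⁻ y : Fin n → ℝ, ∫⁻ x : ℝ, G (x, y) := lintegral_prod_symm' G hGmeas
        _ = ∫⁻ y : Fin n → ℝ,
            ENNReal.ofReal ((1 + ∑ j, y j ^ (2 * (q / w (Fin.castSucc j)))) ^ (s + 1/(2*(m:ℝ)))) * J := by
            refine lintegral_congr fun y => ?_
            exact lintegral_scale hm (Cpos y) s
    have hexp : s + 1/(2*(m:ℝ)) = (k + W) / (2 * (q:ℝ)) := by
      rw [hs_def, hmR]
      field_simp
    have hsum' : (∑ j : Fin (n+1), (w j : ℝ)) = (∑ j : Fin n, (w (Fin.castSucc j) : ℝ)) + W := by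
      rw [Fin.sum_univ_castSucc]
    rcases lt_or_ge k (-W) with hk | hk
    · -- integrable tail case
      have h2ms : 2 * (m:ℝ) * s < -1 := by
        rw [hs_def, hmR]
        have h1 : 2 * ((q:ℝ)/W) * (k / (2 * q)) = k / W := by field_simp
        rw [h1, div_lt_iff₀ hW0]
        linarith
      have hJtop : J ≠ ⊤ := (oneD_lintegral_ne_top_iff hm s).mpr h2ms
      have hJ0 : J ≠ 0 := oneD_lintegral_ne_zero m s
      rw [htot, lintegral_mul_const' J _ hJtop]
      have hiff := ih (fun j => w (Fin.castSucc j)) (fun j => hw _) (fun j => hdvd _) (k + W)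
      rw [← hexp] at hiff
      constructor
      · intro h
        have hA : (∫⁻ y : Fin n → ℝ,
            ENNReal.ofReal ((1 + ∑ j, y j ^ (2 * (q / w (Fin.castSucc j)))) ^ (s + 1/(2*(m:ℝ))))) ≠ ⊤ := by
          intro hA
          rw [hA, ENNReal.top_mul hJ0] at h
          exact h rfl
        rcases hiff.mp hA with h0 | h'
        · right
          subst h0
          rw [hsum']
          simp only [Finset.univ_eq_empty, Finset.sum_empty, zero_add]
          exact hk
        · right
          rw [hsum']
          linarith
      · intro h
        have h' : k + W < -∑ j : Fin n, (w (Fin.castSucc j) : ℝ) := by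
          rcases h with h0 | h
          · exact absurd h0 (Nat.succ_ne_zero n)
          · rw [hsum'] at h; linarith
        exact ENNReal.mul_ne_top (hiff.mpr (Or.inr h')) hJtop
    · -- divergent case
      have h2ms : ¬ (2 * (m:ℝ) * s < -1) := by
        rw [hs_def, hmR]
        have h1 : 2 * ((q:ℝ)/W) * (k / (2 * q)) = k / W := by field_simp
        rw [h1, div_lt_iff₀ hW0, not_lt]
        linarith
      have hJtop : J = ⊤ := by
        by_contra hcon
        exact h2ms ((oneD_lintegral_ne_top_iff hm s).mp hcon)
      rw [htot]
      have hinner : ∀ y : Fin n → ℝ,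
          ENNReal.ofReal ((1 + ∑ j, y j ^ (2 * (q / w (Fin.castSucc j)))) ^ (s + 1/(2*(m:ℝ)))) * J = ⊤ := by
        intro y
        rw [hJtop, ENNReal.mul_top]
        exact (ENNReal.ofReal_pos.mpr (Real.rpow_pos_of_pos (Cpos y) _)).ne'
      rw [lintegral_congr hinner, lintegral_const]
      have hμ : (volume : Measure (Fin n → ℝ)) univ ≠ 0 :=
        (isOpen_univ.measure_pos volume univ_nonempty).ne'
      rw [ENNReal.top_mul hμ]
      simp only [ne_eq, not_true_eq_false, false_iff, not_or]
      refine ⟨Nat.succ_ne_zero n, not_lt.mpr ?_⟩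
      rw [hsum']
      have hSS : 0 ≤ ∑ j : Fin n, (w (Fin.castSucc j) : ℝ) :=
        Finset.sum_nonneg fun j _ => Nat.cast_nonneg _
      linarith

/-- For the quasi-norm `‖v‖_α = (Σ_j v_j^{2q/w_j})^{1/(2q)}` on `ℝ^n` with
positive integer weights `w j ∣ q` and `⟨v⟩_α = (1 + ‖v‖_α^{2q})^{1/(2q)}`, the function
`v ↦ ⟨v⟩_α^k` is Lebesgue integrable if and only if `k < -(w 1 + ⋯ + w n)`. -/
theorem stmt_4 (n q : ℕ) (hn : 0 < n) (hq : 0 < q) (w : Fin n → ℕ)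
    (hw : ∀ j, 1 ≤ w j) (hdvd : ∀ j, w j ∣ q) (k : ℝ) :
    Integrable
      (fun v : Fin n → ℝ => (1 + ∑ j, v j ^ (2 * (q / w j))) ^ (k / (2 * (q : ℝ)))) ↔
      k < -∑ j, (w j : ℝ) := by
  have hpos : ∀ v : Fin n → ℝ, 0 < 1 + ∑ j, v j ^ (2 * (q / w j)) := fun v => by
    have : 0 ≤ ∑ j, v j ^ (2 * (q / w j)) := Finset.sum_nonneg fun j _ => even_pow_nonneg _ _
    linarith
  have hc : Continuous (fun v : Fin n → ℝ =>
      (1 + ∑ j, v j ^ (2 * (q / w j))) ^ (k / (2 * (q:ℝ)))) :=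
    (continuous_const.add (continuous_finset_sum _ fun j _ =>
      (continuous_apply j).pow _)).rpow_const fun v => Or.inl (hpos v).ne'
  rw [← lintegral_ofReal_ne_top_iff_integrable hc.aestronglyMeasurable
    (ae_of_all _ fun v => Real.rpow_nonneg (hpos v).le _)]
  rw [key q hq n w hw hdvd k]
  simp [hn.ne']
end

section
/- Let θ be a polynomial right action of a graded Lie group G on ℝ^d such that the shear map Θ : ℝ^d × G → ℝ^d × ℝ^d, Θ(x,v) = (x, θ_v(x)), is a polynomial diffeomorphism. Then for fixed x, the orbit map v ↦ θ(x,v) from G to ℝ^d is a polynomial diffeomorphism, and the quantity |det D_v(θ(x,·))| is a nonzero constant independent of x and v. -/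
open MvPolynomial

/-- evaluation commutes with polynomial substitution -/
lemma my_eval_aeval {σ τ : Type*} (f : σ → MvPolynomial τ ℝ) (z : τ → ℝ)
    (r : MvPolynomial σ ℝ) :
    eval z (aeval f r) = eval (fun s => eval z (f s)) r := by
  rw [aeval_def, eval_eval₂]
  have h1 : (eval z).comp (algebraMap ℝ (MvPolynomial τ ℝ)) = RingHom.id ℝ := by
    ext r; simp [MvPolynomial.algebraMap_eq]
  rw [h1, eval₂_id]

/-- line trick : a factor of 1 has constant evaluation -/
lemma my_const {σ : Type*} (A B : MvPolynomial σ ℝ) (h : A * B = 1)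
    (z₀ z₁ : σ → ℝ) : eval z₀ A = eval z₁ A := by
  set f : σ → Polynomial ℝ :=
    fun s => Polynomial.C (z₀ s) + Polynomial.C (z₁ s - z₀ s) * Polynomial.X with hf
  have key : ∀ (r : MvPolynomial σ ℝ) (t : ℝ),
      Polynomial.eval t (aeval f r) = eval (fun s => z₀ s + (z₁ s - z₀ s) * t) r := by
    intro r t
    rw [aeval_def]
    have := eval₂_comp_left (Polynomial.evalRingHom t)
      (algebraMap ℝ (Polynomial ℝ)) f r
    rw [Polynomial.coe_evalRingHom] at this
    rw [this]
    have h1 : (Polynomial.evalRingHom t).comp (algebraMap ℝ (Polynomial ℝ)) = RingHom.id ℝ := by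
      ext r; simp
    rw [h1, eval₂_id]
    have h2 : (Polynomial.eval t ∘ f) = fun s => z₀ s + (z₁ s - z₀ s) * t := by
      funext s; simp [hf]
    rw [h2]
  have hunit : IsUnit (aeval f A) :=
    IsUnit.of_mul_eq_one (aeval f B) (by rw [← map_mul, h, map_one])
  obtain ⟨r, -, hCr⟩ := Polynomial.isUnit_iff.mp hunit
  have h0 := key A 0
  have h1 := key A 1
  rw [← hCr] at h0 h1
  simp only [Polynomial.eval_C, mul_zero, add_zero, mul_one] at h0 h1
  have e0 : (fun s => z₀ s) = z₀ := rfl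
  have e1 : (fun s => z₀ s + (z₁ s - z₀ s)) = z₁ := by funext s; ring
  rw [e0] at h0; rw [e1] at h1
  rw [← h0, ← h1]

noncomputable def polyDeriv {d : ℕ} (p : MvPolynomial (Fin d) ℝ) (v : Fin d → ℝ) :
    (Fin d → ℝ) →L[ℝ] ℝ :=
  ∑ j, eval v (pderiv j p) • (ContinuousLinearMap.proj j : (Fin d → ℝ) →L[ℝ] ℝ)

lemma polyDeriv_apply {d : ℕ} (p : MvPolynomial (Fin d) ℝ) (v w : Fin d → ℝ) :
    polyDeriv p v w = ∑ j, eval v (pderiv j p) * w j := by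
  simp [polyDeriv, ContinuousLinearMap.sum_apply]

lemma polyDeriv_single {d : ℕ} (p : MvPolynomial (Fin d) ℝ) (v : Fin d → ℝ) (j : Fin d) :
    polyDeriv p v (Pi.single j 1) = eval v (pderiv j p) := by
  rw [polyDeriv_apply]
  simp [Pi.single_apply]

lemma hasFDerivAt_eval {d : ℕ} (p : MvPolynomial (Fin d) ℝ) (v : Fin d → ℝ) :
    HasFDerivAt (fun w => eval w p) (polyDeriv p v) v := by
  induction p using MvPolynomial.induction_on with
  | C a =>
      have : polyDeriv (C a : MvPolynomial (Fin d) ℝ) v = 0 := by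
        ext w; simp [polyDeriv_apply]
      rw [this]
      simpa using hasFDerivAt_const a v
  | add p q hp hq =>
      have h := hp.add hq
      have : polyDeriv (p + q) v = polyDeriv p v + polyDeriv q v := by
        ext w; simp [polyDeriv_apply, Finset.sum_add_distrib, add_mul]
      rw [this]
      simp only [map_add]; exact h
  | mul_X p i hp =>
      have hX : HasFDerivAt (fun w : Fin d → ℝ => w i)
          (ContinuousLinearMap.proj i : (Fin d → ℝ) →L[ℝ] ℝ) v := hasFDerivAt_apply i v
      have h := hp.mul hX
      have heq : (fun w => eval w (p * X i)) = fun w : Fin d → ℝ => eval w p * w i := by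
        funext w; simp
      have hD : polyDeriv (p * X i) v
          = eval v p • (ContinuousLinearMap.proj i : (Fin d → ℝ) →L[ℝ] ℝ)
            + v i • polyDeriv p v := by
        ext w
        simp only [polyDeriv_apply, ContinuousLinearMap.add_apply,
          ContinuousLinearMap.smul_apply, ContinuousLinearMap.proj_apply, smul_eq_mul]
        have : ∀ j, eval v (pderiv j (p * X i)) * w j
            = eval v (pderiv j p) * v i * w j
              + (if j = i then eval v p * w j else 0) := by
          intro j
          rw [pderiv_mul, pderiv_X]
          rcases eq_or_ne j i with rfl | hji
          · simp [Pi.single_apply]; ring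
          · simp [Pi.single_apply, hji]
        rw [Finset.sum_congr rfl fun j _ => this j, Finset.sum_add_distrib,
          Finset.sum_ite_eq' Finset.univ i fun j => eval v p * w j]
        simp only [Finset.mem_univ, if_true, Finset.mul_sum]
        rw [add_comm]
        congr 1
        exact Finset.sum_congr rfl fun j _ => by ring
      rw [heq, hD]
      exact h

lemma fderiv_eval_single {d : ℕ} (p : MvPolynomial (Fin d) ℝ) (v : Fin d → ℝ) (j : Fin d) :
    fderiv ℝ (fun w => eval w p) v (Pi.single j 1) = eval v (pderiv j p) := by
  rw [(hasFDerivAt_eval p v).fderiv, polyDeriv_apply]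
  simp [Pi.single_apply]

lemma eval_aeval_elim {d : ℕ} (x v : Fin d → ℝ) (r : MvPolynomial (Fin d ⊕ Fin d) ℝ) :
    eval v (aeval (Sum.elim X (C ∘ x)) r) = eval (Sum.elim v x) r := by
  rw [my_eval_aeval]
  have h : (fun s => eval v (Sum.elim X (⇑C ∘ x) s)) = Sum.elim v x := by
    funext s; cases s <;> simp
  rw [h]

/-- Let `θ` be a polynomial right action of a graded group `G ≅ ℝ^d` on `ℝ^d`
whose shear map `Θ (x, v) = (x, θ x v)` is a polynomial diffeomorphism (with polynomial
inverse `Ω`). Then every orbit map `v ↦ θ x v` is a polynomial diffeomorphism and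
`|det D_v (θ x ·)|` is a nonzero constant independent of `x` and `v`. -/
theorem stmt_12 (d : ℕ)
    (θ : (Fin d → ℝ) → (Fin d → ℝ) → (Fin d → ℝ))
    (hθpoly : ∀ i : Fin d, ∃ p : MvPolynomial (Fin d ⊕ Fin d) ℝ,
      ∀ x v, θ x v i = eval (Sum.elim x v) p)
    (Ω : ((Fin d → ℝ) × (Fin d → ℝ)) → ((Fin d → ℝ) × (Fin d → ℝ)))
    (hΩpoly₁ : ∀ i : Fin d, ∃ p : MvPolynomial (Fin d ⊕ Fin d) ℝ,
      ∀ x y, (Ω (x, y)).1 i = eval (Sum.elim x y) p)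
    (hΩpoly₂ : ∀ i : Fin d, ∃ p : MvPolynomial (Fin d ⊕ Fin d) ℝ,
      ∀ x y, (Ω (x, y)).2 i = eval (Sum.elim x y) p)
    (hΩΘ : ∀ x v, Ω (x, θ x v) = (x, v))
    (hΘΩ : ∀ x y : Fin d → ℝ, ((Ω (x, y)).1, θ (Ω (x, y)).1 (Ω (x, y)).2) = (x, y)) :
    (∀ x : Fin d → ℝ, ∃ ψ : (Fin d → ℝ) → (Fin d → ℝ),
      (∀ i : Fin d, ∃ p : MvPolynomial (Fin d) ℝ, ∀ y, ψ y i = eval y p) ∧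
      Function.LeftInverse ψ (θ x) ∧ Function.RightInverse ψ (θ x)) ∧
    ∃ c : ℝ, c ≠ 0 ∧ ∀ (x v : Fin d → ℝ),
      |Matrix.det (Matrix.of fun i j : Fin d =>
        fderiv ℝ (fun v' => θ x v' i) v (Pi.single j 1))| = c := by
  classical
  -- swapped polynomial representations
  have hPex : ∀ i, ∃ P : MvPolynomial (Fin d ⊕ Fin d) ℝ,
      ∀ x v, θ x v i = eval (Sum.elim v x) P := by
    intro i
    obtain ⟨p, hp⟩ := hθpoly i
    refine ⟨rename Sum.swap p, fun x v => ?_⟩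
    rw [hp, eval_rename]
    have h : Sum.elim v x ∘ Sum.swap = Sum.elim x v := by funext s; cases s <;> rfl
    rw [h]
  choose P hPs using hPex
  have hQex : ∀ i, ∃ Q : MvPolynomial (Fin d ⊕ Fin d) ℝ,
      ∀ x y, (Ω (x, y)).2 i = eval (Sum.elim y x) Q := by
    intro i
    obtain ⟨p, hp⟩ := hΩpoly₂ i
    refine ⟨rename Sum.swap p, fun x y => ?_⟩
    rw [hp, eval_rename]
    have h : Sum.elim y x ∘ Sum.swap = Sum.elim x y := by funext s; cases s <;> rfl
    rw [h]
  choose Q hQs using hQex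
  have hΩ1 : ∀ x y, (Ω (x, y)).1 = x := fun x y => congrArg Prod.fst (hΘΩ x y)
  have hLeft : ∀ x, Function.LeftInverse (fun y => (Ω (x, y)).2) (θ x) := by
    intro x v; simp [hΩΘ x v]
  have hRight : ∀ x, Function.RightInverse (fun y => (Ω (x, y)).2) (θ x) := by
    intro x y
    have h2 := congrArg Prod.snd (hΘΩ x y)
    simp only at h2
    rwa [hΩ1] at h2
  -- the x-substituted polynomials
  set px : (Fin d → ℝ) → Fin d → MvPolynomial (Fin d) ℝ :=
    fun x i => aeval (Sum.elim X (C ∘ x)) (P i) with hpx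
  set qx : (Fin d → ℝ) → Fin d → MvPolynomial (Fin d) ℝ :=
    fun x i => aeval (Sum.elim X (C ∘ x)) (Q i) with hqx
  have hθeval : ∀ x w i, θ x w i = eval w (px x i) := by
    intro x w i; rw [hpx]; simp only; rw [eval_aeval_elim, hPs]
  have hψeval : ∀ x y i, (Ω (x, y)).2 i = eval y (qx x i) := by
    intro x y i; rw [hqx]; simp only; rw [eval_aeval_elim, hQs]
  constructor
  · -- part 1 : orbit maps are polynomial diffeomorphisms
    intro x
    exact ⟨fun y => (Ω (x, y)).2,
      fun i => ⟨qx x i, fun y => hψeval x y i⟩, hLeft x, hRight x⟩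
  -- part 2 : constant Jacobian determinant
  set detP : MvPolynomial (Fin d ⊕ Fin d) ℝ :=
    (Matrix.of fun i j : Fin d => pderiv (Sum.inl j) (P i)).det with hdetP
  set detQ : MvPolynomial (Fin d ⊕ Fin d) ℝ :=
    (Matrix.of fun i j : Fin d => pderiv (Sum.inl j) (Q i)).det with hdetQ
  -- partial derivatives transfer
  have hpd : ∀ (x v : Fin d → ℝ) i j,
      eval v (pderiv j (px x i)) = eval (Sum.elim v x) (pderiv (Sum.inl j) (P i)) := by
    intro x v i j
    rw [hpx]; simp only
    rw [← aeval_sumElim_pderiv_inl, eval_aeval_elim]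
  have hqd : ∀ (x y : Fin d → ℝ) i j,
      eval y (pderiv j (qx x i)) = eval (Sum.elim y x) (pderiv (Sum.inl j) (Q i)) := by
    intro x y i j
    rw [hqx]; simp only
    rw [← aeval_sumElim_pderiv_inl, eval_aeval_elim]
  -- chain rule : the product of determinants is 1
  have hchain : ∀ x v : Fin d → ℝ,
      eval (Sum.elim (θ x v) x) detQ * eval (Sum.elim v x) detP = 1 := by
    intro x v
    set y := θ x v with hy
    have hθfun : θ x = fun w i => eval w (px x i) := by
      funext w i; exact hθeval x w i
    have hψfun : (fun z => (Ω (x, z)).2) = fun z i => eval z (qx x i) := by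
      funext z i; exact hψeval x z i
    have hA : HasFDerivAt (θ x)
        (ContinuousLinearMap.pi fun i => polyDeriv (px x i) v) v := by
      rw [hθfun]; exact hasFDerivAt_pi.2 fun i => hasFDerivAt_eval _ _
    have hB : HasFDerivAt (fun z => (Ω (x, z)).2)
        (ContinuousLinearMap.pi fun i => polyDeriv (qx x i) y) y := by
      rw [hψfun]; exact hasFDerivAt_pi.2 fun i => hasFDerivAt_eval _ _
    have hcomp : HasFDerivAt ((fun z => (Ω (x, z)).2) ∘ (θ x))
        ((ContinuousLinearMap.pi fun i => polyDeriv (qx x i) y).comp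
          (ContinuousLinearMap.pi fun i => polyDeriv (px x i) v)) v := hB.comp v hA
    have hid : ((fun z => (Ω (x, z)).2) ∘ (θ x)) = id := by
      funext w; exact hLeft x w
    rw [hid] at hcomp
    have huniq : (ContinuousLinearMap.pi fun i => polyDeriv (qx x i) y).comp
          (ContinuousLinearMap.pi fun i => polyDeriv (px x i) v)
        = ContinuousLinearMap.id ℝ (Fin d → ℝ) :=
      hcomp.unique (hasFDerivAt_id v)
    -- matrix identity
    set Mθ : Matrix (Fin d) (Fin d) ℝ :=
      Matrix.of fun i j => eval v (pderiv j (px x i)) with hMθ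
    set Mψ : Matrix (Fin d) (Fin d) ℝ :=
      Matrix.of fun i j => eval y (pderiv j (qx x i)) with hMψ
    have hmul : Mψ * Mθ = 1 := by
      ext i j
      have happ := congrFun (congrArg (fun (L : (Fin d → ℝ) →L[ℝ] (Fin d → ℝ)) =>
        L (Pi.single j 1)) huniq) i
      simp only [ContinuousLinearMap.comp_apply, ContinuousLinearMap.id_apply] at happ
      rw [ContinuousLinearMap.pi_apply, polyDeriv_apply] at happ
      simp only [ContinuousLinearMap.pi_apply, polyDeriv_single] at happ
      rw [Matrix.mul_apply]
      simp only [hMψ, hMθ, Matrix.of_apply, Matrix.one_apply]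
      rw [happ, Pi.single_apply]
    have hdet := congrArg Matrix.det hmul
    rw [Matrix.det_mul, Matrix.det_one] at hdet
    have hMθdet : Mθ.det = eval (Sum.elim v x) detP := by
      rw [hdetP, RingHom.map_det]
      congr 1
      ext i j
      simp [hMθ, Matrix.map_apply, hpd]
    have hMψdet : Mψ.det = eval (Sum.elim y x) detQ := by
      rw [hdetQ, RingHom.map_det]
      congr 1
      ext i j
      simp [hMψ, Matrix.map_apply, hqd]
    rw [hMψdet, hMθdet] at hdet
    exact hdet
  -- globalize : the product polynomial is 1
  set S : Fin d ⊕ Fin d → MvPolynomial (Fin d ⊕ Fin d) ℝ :=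
    Sum.elim (fun j => P j) (fun k => X (Sum.inr k)) with hS
  have hGeval : ∀ z : Fin d ⊕ Fin d → ℝ,
      eval z (aeval S detQ * detP) = 1 := by
    intro z
    have hz : z = Sum.elim (z ∘ Sum.inl) (z ∘ Sum.inr) := by
      funext s; cases s <;> rfl
    rw [map_mul, my_eval_aeval]
    have harg : (fun t => eval z (S t))
        = Sum.elim (θ (z ∘ Sum.inr) (z ∘ Sum.inl)) (z ∘ Sum.inr) := by
      funext t
      cases t with
      | inl j => simp only [hS, Sum.elim_inl]; rw [hPs, ← hz]
      | inr k => simp [hS]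
    rw [harg]
    have hc := hchain (z ∘ Sum.inr) (z ∘ Sum.inl)
    rw [← hz] at hc
    exact hc
  have hG : aeval S detQ * detP = 1 :=
    MvPolynomial.funext fun z => by rw [hGeval z, map_one]
  have hG' : detP * aeval S detQ = 1 := by rw [mul_comm]; exact hG
  refine ⟨|eval (fun _ => 0) detP|, ?_, ?_⟩
  · have := hGeval fun _ => 0
    rw [map_mul] at this
    intro hc
    rw [abs_eq_zero] at hc
    rw [hc, mul_zero] at this
    exact zero_ne_one this
  · intro x v
    have hmat : (Matrix.of fun i j : Fin d =>
          fderiv ℝ (fun v' => θ x v' i) v (Pi.single j 1))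
        = Matrix.of fun i j => eval (Sum.elim v x) (pderiv (Sum.inl j) (P i)) := by
      ext i j
      have hfun : (fun v' => θ x v' i) = fun v' => eval v' (px x i) := by
        funext v'; exact hθeval x v' i
      rw [Matrix.of_apply, Matrix.of_apply, hfun, fderiv_eval_single, hpd]
    rw [hmat]
    have : (Matrix.of fun i j : Fin d =>
          eval (Sum.elim v x) (pderiv (Sum.inl j) (P i))).det
        = eval (Sum.elim v x) detP := by
      rw [hdetP, RingHom.map_det]
      rfl
    rw [this]
    exact congrArg abs (my_const detP (aeval S detQ) hG' _ _)
end
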